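/- arXiv:2307.16059 — 2 statements merged into one kernel-verified Lean document; each statement's English description precedes it below -/
import Mathlib

section
/- Let f be convex and differentiable on a convex compact set Q with minimizer x*, x ∈ Q, s ∈ argmin_{z∈Q} ⟪∇f(x), z⟫, d = s - x, and L > 0. If the partial-step condition θ < 1 holds, i.e. -⟪∇f(x), d⟫ < L‖d‖², and the sufficient-decrease condition f(x + θd) ≤ f(x) - (⟪∇f(x), d⟫)²/(2L‖d‖²) holds with θ = -⟪∇f(x), d⟫/(L‖d‖²), then, writing D for the diameter of Q, f(x + θd) - f(x*) ≤ (f(x) - f(x*))·(1 - (f(x) - f(x*))/(2LD²)). -/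
open RealInnerProductSpace

lemma grad_first_order {n : ℕ} (f : EuclideanSpace ℝ (Fin n) → ℝ)
    (hconv : ConvexOn ℝ Set.univ f) (hdiff : Differentiable ℝ f)
    (x y : EuclideanSpace ℝ (Fin n)) :
    f x + ⟪gradient f x, y - x⟫ ≤ f y := by
  set g : ℝ → ℝ := fun t => f (x + t • (y - x)) with hg
  have hgconv : ConvexOn ℝ Set.univ g := by
    have : g = f ∘ (fun t : ℝ => x + t • (y - x)) := rfl
    have hline : g = f ∘ (AffineMap.lineMap x y : ℝ →ᵃ[ℝ] EuclideanSpace ℝ (Fin n)) := by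
      funext t
      simp [hg, AffineMap.lineMap_apply, add_comm]
    rw [hline]
    refine (hconv.comp_affineMap _).subset (fun t _ => Set.mem_univ _) convex_univ
  have hc : HasDerivAt (fun t : ℝ => x + t • (y - x)) (y - x) 0 := by
    simpa using ((hasDerivAt_id (0:ℝ)).smul_const (y - x)).const_add x
  have hfd : HasFDerivAt f (InnerProductSpace.toDual ℝ _ (gradient f x)) (x + (0:ℝ) • (y - x)) := by
    simpa using ((hdiff x).hasGradientAt).hasFDerivAt
  have hgderiv : HasDerivAt g ⟪gradient f x, y - x⟫ 0 := by
    convert hfd.comp_hasDerivAt 0 hc using 1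
    · rfl
    · rfl
    · rfl
    · exact InnerProductSpace.toDual_apply_apply.symm
  have hslope : ⟪gradient f x, y - x⟫ ≤ slope g 0 1 :=
    hgconv.le_slope_of_hasDerivWithinAt_Ioi (Set.mem_univ 0) (Set.mem_univ 1)
      one_pos (hgderiv.hasDerivWithinAt)
  have : slope g 0 1 = f y - f x := by
    simp [slope_def_field, hg]
  rw [this] at hslope
  linarith

theorem stmt2 {n : ℕ} (f : EuclideanSpace ℝ (Fin n) → ℝ)
    (Q : Set (EuclideanSpace ℝ (Fin n)))
    (hQconv : Convex ℝ Q) (hQcomp : IsCompact Q)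
    (hconv : ConvexOn ℝ Set.univ f) (hdiff : Differentiable ℝ f)
    (x s xstar : EuclideanSpace ℝ (Fin n))
    (hx : x ∈ Q) (hs : s ∈ Q) (hxstar : xstar ∈ Q)
    (hsmin : ∀ z ∈ Q, ⟪gradient f x, s⟫ ≤ ⟪gradient f x, z⟫)
    (hmin : ∀ y ∈ Q, f xstar ≤ f y)
    (L : ℝ) (hL : 0 < L)
    (hpartial : -⟪gradient f x, s - x⟫ < L * ‖s - x‖ ^ 2)
    (hdec : f (x + (-⟪gradient f x, s - x⟫ / (L * ‖s - x‖ ^ 2)) • (s - x)) ≤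
      f x - (⟪gradient f x, s - x⟫) ^ 2 / (2 * L * ‖s - x‖ ^ 2)) :
    f (x + (-⟪gradient f x, s - x⟫ / (L * ‖s - x‖ ^ 2)) • (s - x)) - f xstar ≤
      (f x - f xstar) * (1 - (f x - f xstar) / (2 * L * (Metric.diam Q) ^ 2)) := by
  set g := ⟪gradient f x, s - x⟫ with hgdef
  set h := f x - f xstar with hhdef
  -- d ≠ 0
  have hd0 : s - x ≠ 0 := by
    intro h0
    have hg0 : g = 0 := by rw [hgdef, h0, inner_zero_right]
    rw [h0, hg0] at hpartial
    simp at hpartial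
  have hdnorm : 0 < ‖s - x‖ := norm_pos_iff.mpr hd0
  -- diameter bound
  have hD : ‖s - x‖ ≤ Metric.diam Q := by
    rw [← dist_eq_norm]
    exact Metric.dist_le_diam_of_mem hQcomp.isBounded hs hx
  have hDpos : 0 < Metric.diam Q := lt_of_lt_of_le hdnorm hD
  -- h ≥ 0
  have hh0 : 0 ≤ h := by
    have := hmin x hx; linarith
  -- duality gap: h ≤ -g
  have hgap : h ≤ -g := by
    have h1 : f x + ⟪gradient f x, xstar - x⟫ ≤ f xstar :=
      grad_first_order f hconv hdiff x xstar
    have h2 : ⟪gradient f x, s⟫ ≤ ⟪gradient f x, xstar⟫ := hsmin xstar hxstar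
    have h3 : ⟪gradient f x, s - x⟫ ≤ ⟪gradient f x, xstar - x⟫ := by
      rw [inner_sub_right, inner_sub_right]; linarith
    simp only [hgdef, hhdef]
    linarith
  -- key: h^2/(2L D^2) ≤ g^2/(2L ‖d‖^2)
  have hsq : h ^ 2 ≤ g ^ 2 := by
    have : h ^ 2 ≤ (-g) ^ 2 := by nlinarith
    simpa using this
  have hkey : h ^ 2 / (2 * L * (Metric.diam Q) ^ 2) ≤ g ^ 2 / (2 * L * ‖s - x‖ ^ 2) := by
    apply div_le_div₀ (sq_nonneg g) hsq (by positivity)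
    have : ‖s - x‖ ^ 2 ≤ (Metric.diam Q) ^ 2 := by nlinarith
    nlinarith
  have : (f x - f xstar) * (1 - (f x - f xstar) / (2 * L * (Metric.diam Q) ^ 2))
      = h - h ^ 2 / (2 * L * (Metric.diam Q) ^ 2) := by
    rw [← hhdef]; ring
  rw [this]
  linarith [hdec, hkey]
end

section
/- Let Q ⊂ ℝ^n be compact convex with diameter D, f convex differentiable with minimizer x* in the interior of Q (B(x*, r) ⊆ Q for some r > 0), and suppose f is c-gradient-dominated: (f(x) - f(x*))/c² ≤ ‖∇f(x)‖² for all x ∈ Q. Fix x ∈ Q, s ∈ argmin_{z∈Q} ⟪∇f(x), z⟫, d = s - x, L > 0, and suppose the sufficient-decrease inequality f(x⁺) ≤ f(x) - (⟪∇f(x), d⟫)²/(2L‖d‖²) holds for the next iterate x⁺. Then h(x⁺) ≤ h(x)·(1 - r²/(2Lc²D²)), where h(y) := f(y) - f(x*). -/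
open RealInnerProductSpace

lemma grad_convex_ineq {n : ℕ} (f : EuclideanSpace ℝ (Fin n) → ℝ)
    (hconv : ConvexOn ℝ Set.univ f) (hdiff : Differentiable ℝ f)
    (x y : EuclideanSpace ℝ (Fin n)) :
    ⟪gradient f x, y - x⟫ ≤ f y - f x := by
  by_cases hxy : y = x
  · simp [hxy]
  · set v := y - x with hv
    set φ : ℝ → ℝ := fun t => f (t • v + x) with hφ
    have hφconv : ConvexOn ℝ Set.univ φ := by
      have := hconv.comp_affineMap (AffineMap.lineMap x y)
      have heq : φ = f ∘ (AffineMap.lineMap x y : ℝ →ᵃ[ℝ] _) := by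
        ext t; simp [hφ, AffineMap.lineMap_apply, hv]
      rw [heq]
      simpa only [Set.preimage_univ] using this
    have hcurve : HasDerivAt (fun t : ℝ => t • v + x) v 0 := by
      simpa using ((hasDerivAt_id (0:ℝ)).smul_const v).add_const x
    have hf : HasFDerivAt f (fderiv ℝ f x) ((0:ℝ) • v + x) := by
      simpa using (hdiff x).hasFDerivAt
    have hder : HasDerivAt φ (fderiv ℝ f x v) 0 := hf.comp_hasDerivAt 0 hcurve
    have hgradeq : fderiv ℝ f x v = ⟪gradient f x, v⟫ := by
      rw [gradient]
      simp
    rw [hgradeq] at hder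
    have := hφconv.le_slope_of_hasDerivAt (Set.mem_univ (0:ℝ)) (Set.mem_univ (1:ℝ))
      one_pos hder
    rw [slope_def_field] at this
    simpa [hφ, hv] using this

theorem stmt9 {n : ℕ} (Q : Set (EuclideanSpace ℝ (Fin n)))
    (hQconv : Convex ℝ Q) (hQcomp : IsCompact Q)
    (f : EuclideanSpace ℝ (Fin n) → ℝ)
    (hconv : ConvexOn ℝ Set.univ f) (hdiff : Differentiable ℝ f)
    (xstar : EuclideanSpace ℝ (Fin n)) (hxstar : xstar ∈ Q)
    (hmin : ∀ y ∈ Q, f xstar ≤ f y)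
    (r : ℝ) (hr : 0 < r) (hball : Metric.closedBall xstar r ⊆ Q)
    (c : ℝ) (hc : 0 < c)
    (hgd : ∀ x ∈ Q, (f x - f xstar) / c ^ 2 ≤ ‖gradient f x‖ ^ 2)
    (x s xplus : EuclideanSpace ℝ (Fin n)) (hx : x ∈ Q) (hs : s ∈ Q)
    (hsmin : ∀ z ∈ Q, ⟪gradient f x, s⟫ ≤ ⟪gradient f x, z⟫)
    (L : ℝ) (hL : 0 < L)
    (hdec : f xplus ≤ f x -
      (⟪gradient f x, s - x⟫) ^ 2 / (2 * L * ‖s - x‖ ^ 2)) :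
    f xplus - f xstar ≤
      (f x - f xstar) * (1 - r ^ 2 / (2 * L * c ^ 2 * (Metric.diam Q) ^ 2)) := by
  set g := gradient f x with hg
  have hfx : f xstar ≤ f x := hmin x hx
  by_cases hg0 : g = 0
  · have h1 := hgd x hx
    rw [← hg, hg0] at h1
    simp at h1
    have hc2 : (0:ℝ) < c ^ 2 := by positivity
    have hfe : f x ≤ f xstar := by
      by_contra hcon
      push_neg at hcon
      have : 0 < (f x - f xstar) / c ^ 2 := div_pos (by linarith) hc2
      linarith
    rw [hg0] at hdec
    simp at hdec
    have hxx : f x = f xstar := le_antisymm hfe hfx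
    rw [hxx]
    simp
    linarith [hdec, hxx]
  · have hgn : 0 < ‖g‖ := norm_pos_iff.mpr hg0
    set z : EuclideanSpace ℝ (Fin n) := xstar - (r / ‖g‖) • g with hz
    have hzQ : z ∈ Q := by
      apply hball
      rw [Metric.mem_closedBall, dist_eq_norm, hz]
      have : xstar - (r / ‖g‖) • g - xstar = -((r / ‖g‖) • g) := by abel
      rw [this, norm_neg, norm_smul]
      rw [Real.norm_eq_abs, abs_of_pos (by positivity)]
      rw [div_mul_cancel₀ _ (ne_of_gt hgn)]
    have hsz : ⟪g, s⟫ ≤ ⟪g, z⟫ := hsmin z hzQ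
    have hzin : ⟪g, z⟫ = ⟪g, xstar⟫ - r * ‖g‖ := by
      rw [hz, inner_sub_right, real_inner_smul_right, real_inner_self_eq_norm_sq]
      field_simp
    have hcv : ⟪g, xstar - x⟫ ≤ f xstar - f x := grad_convex_ineq f hconv hdiff x xstar
    have hkey : ⟪g, s - x⟫ ≤ -(r * ‖g‖) := by
      have e1 : ⟪g, s - x⟫ = ⟪g, s⟫ - ⟪g, x⟫ := inner_sub_right _ _ _
      have e2 : ⟪g, xstar - x⟫ = ⟪g, xstar⟫ - ⟪g, x⟫ := inner_sub_right _ _ _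
      linarith [hsz, hzin ▸ hsz, hcv, hfx]
    have hrg : 0 < r * ‖g‖ := by positivity
    have hsx : 0 < ‖s - x‖ := by
      rcases eq_or_lt_of_le (norm_nonneg (s - x)) with h | h
      · exfalso
        have : s - x = 0 := by rwa [eq_comm, norm_eq_zero] at h
        rw [this] at hkey
        simp at hkey
        linarith
      · exact h
    set D := Metric.diam Q with hD
    have hvD : ‖s - x‖ ≤ D := by
      rw [← dist_eq_norm]
      exact Metric.dist_le_diam_of_mem hQcomp.isBounded hs hx
    have hDpos : 0 < D := lt_of_lt_of_le hsx hvD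
    have hsq : r ^ 2 * ‖g‖ ^ 2 ≤ ⟪g, s - x⟫ ^ 2 := by
      nlinarith [hkey, hrg]
    have step1 : r ^ 2 * ‖g‖ ^ 2 / (2 * L * D ^ 2) ≤
        ⟪g, s - x⟫ ^ 2 / (2 * L * ‖s - x‖ ^ 2) := by
      apply div_le_div₀ (by positivity) hsq (by positivity)
      have : ‖s - x‖ ^ 2 ≤ D ^ 2 := by nlinarith
      nlinarith
    have hgd2 : (f x - f xstar) / c ^ 2 ≤ ‖g‖ ^ 2 := hgd x hx
    have step2 : (f x - f xstar) * (r ^ 2 / (2 * L * c ^ 2 * D ^ 2)) ≤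
        r ^ 2 * ‖g‖ ^ 2 / (2 * L * D ^ 2) := by
      have e : (f x - f xstar) * (r ^ 2 / (2 * L * c ^ 2 * D ^ 2)) =
          ((f x - f xstar) / c ^ 2) * (r ^ 2 / (2 * L * D ^ 2)) := by
        field_simp
      rw [e]
      calc ((f x - f xstar) / c ^ 2) * (r ^ 2 / (2 * L * D ^ 2))
          ≤ ‖g‖ ^ 2 * (r ^ 2 / (2 * L * D ^ 2)) :=
            mul_le_mul_of_nonneg_right hgd2 (by positivity)
        _ = r ^ 2 * ‖g‖ ^ 2 / (2 * L * D ^ 2) := by ring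
    linarith [hdec, step1, step2]
end
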